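/- arXiv:2301.02095 — 4 statements merged into one kernel-verified Lean document; each statement's English description precedes it below -/
import Mathlib

section
/- Let V : ℝ^d → ℝ be C², let c > 0, and let u : ℝ → ℝ^d be a non-constant global solution of ü = -c u̇ + ∇V(u) such that u(ξ) → e₋ as ξ → -∞ and u(ξ) → e₊ as ξ → +∞, where e₋ and e₊ are critical points of V, and such that u̇(ξ) → 0 as ξ → ±∞. Then e₋ ≠ e₊ and V(e₋) < V(e₊). -/
open Filter

theorem travelling_front_invades_higher_critical_point {d : ℕ}
    (V : EuclideanSpace ℝ (Fin d) → ℝ) (hV : ContDiff ℝ 2 V)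
    (c : ℝ) (hc : 0 < c) (u du : ℝ → EuclideanSpace ℝ (Fin d))
    (hu : ∀ ξ, HasDerivAt u (du ξ) ξ)
    (hdu : ∀ ξ, HasDerivAt du (-c • du ξ + gradient V (u ξ)) ξ)
    (eminus eplus : EuclideanSpace ℝ (Fin d))
    (heMinus : gradient V eminus = 0) (hePlus : gradient V eplus = 0)
    (hnc : ∃ ξ₁ ξ₂ : ℝ, u ξ₁ ≠ u ξ₂)
    (huBot : Tendsto u atBot (nhds eminus)) (hduBot : Tendsto du atBot (nhds 0))
    (huTop : Tendsto u atTop (nhds eplus)) (hduTop : Tendsto du atTop (nhds 0)) :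
    eminus ≠ eplus ∧ V eminus < V eplus := by
  have hVdiff : Differentiable ℝ V := hV.differentiable (by norm_num)
  set E : ℝ → ℝ := fun ξ => (1/2) * (inner ℝ (du ξ) (du ξ) : ℝ) - V (u ξ) with hEdef
  have hE' : ∀ ξ, HasDerivAt E (-c * (inner ℝ (du ξ) (du ξ) : ℝ)) ξ := by
    intro ξ
    have h1 := ((hdu ξ).inner ℝ (hdu ξ)).const_mul (1/2 : ℝ)
    have h2 : HasDerivAt (fun t => V (u t)) ((inner ℝ (gradient V (u ξ)) (du ξ) : ℝ)) ξ := by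
      have := ((hVdiff (u ξ)).hasGradientAt.hasFDerivAt).comp_hasDerivAt ξ (hu ξ)
      simp [InnerProductSpace.toDual_apply_apply] at this ⊢
      exact this
    have h3 := h1.sub h2
    refine h3.congr_deriv ?_
    simp [inner_add_left, inner_add_right, inner_smul_left, inner_smul_right,
      real_inner_comm (du ξ) (gradient V (u ξ))]
    ring
  have hEdiff : Differentiable ℝ E := fun ξ => (hE' ξ).differentiableAt
  have hEanti : Antitone E := by
    apply antitone_of_deriv_nonpos hEdiff
    intro ξ
    rw [(hE' ξ).deriv]
    have : (0:ℝ) ≤ (inner ℝ (du ξ) (du ξ) : ℝ) := real_inner_self_nonneg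
    nlinarith
  -- limits of E
  have hEbot : Tendsto E atBot (nhds (-V eminus)) := by
    have h1 : Tendsto (fun ξ => (inner ℝ (du ξ) (du ξ) : ℝ)) atBot (nhds 0) := by
      have h := hduBot.inner (𝕜 := ℝ) hduBot
      rwa [inner_zero_left] at h
    have h2 : Tendsto (fun ξ => V (u ξ)) atBot (nhds (V eminus)) :=
      (hV.continuous.tendsto eminus).comp huBot
    have h3 := ((h1.const_mul (1/2:ℝ)).sub h2)
    simp only [mul_zero] at h3
    rw [hEdef]
    convert h3 using 1
    ring
  have hEtop : Tendsto E atTop (nhds (-V eplus)) := by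
    have h1 : Tendsto (fun ξ => (inner ℝ (du ξ) (du ξ) : ℝ)) atTop (nhds 0) := by
      have h := hduTop.inner (𝕜 := ℝ) hduTop
      rwa [inner_zero_left] at h
    have h2 : Tendsto (fun ξ => V (u ξ)) atTop (nhds (V eplus)) :=
      (hV.continuous.tendsto eplus).comp huTop
    have h3 := ((h1.const_mul (1/2:ℝ)).sub h2)
    simp only [mul_zero] at h3
    rw [hEdef]
    convert h3 using 1
    ring
  -- there is a point where du ≠ 0
  obtain ⟨ξ₀, hξ₀⟩ : ∃ ξ₀, du ξ₀ ≠ 0 := by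
    by_contra h
    push_neg at h
    obtain ⟨ξ₁, ξ₂, hne⟩ := hnc
    have : u ξ₁ = u ξ₂ := by
      have hconst : ∀ x y : ℝ, u x = u y := by
        intro x y
        have := is_const_of_deriv_eq_zero (f := u) (fun ξ => (hu ξ).differentiableAt)
          (fun ξ => by rw [(hu ξ).deriv, h ξ]) x y
        exact this
      exact hconst ξ₁ ξ₂
    exact hne this
  -- du ≠ 0 near ξ₀
  have hducont : Continuous du := continuous_iff_continuousAt.mpr fun ξ => (hdu ξ).continuousAt
  obtain ⟨ε, hε, hball⟩ := Metric.eventually_nhds_iff.mp (hducont.continuousAt.eventually_ne hξ₀)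
  have hab : ξ₀ < ξ₀ + ε/2 := by linarith
  have hanti : StrictAntiOn E (Set.Icc ξ₀ (ξ₀ + ε/2)) := by
    apply strictAntiOn_of_deriv_neg (convex_Icc _ _) hEdiff.continuous.continuousOn
    intro ξ hξ
    rw [interior_Icc] at hξ
    rw [(hE' ξ).deriv]
    have hne : du ξ ≠ 0 := by
      apply hball
      rw [Real.dist_eq]
      exact abs_sub_lt_iff.mpr ⟨by linarith [hξ.1, hξ.2], by linarith [hξ.1, hξ.2]⟩
    have hpos : (0:ℝ) < (inner ℝ (du ξ) (du ξ) : ℝ) := by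
      rw [real_inner_self_eq_norm_sq]
      exact pow_pos (norm_pos_iff.mpr hne) 2
    nlinarith
  have hEa : E ξ₀ ≤ -V eminus :=
    ge_of_tendsto hEbot ((eventually_le_atBot ξ₀).mono fun η hη => hEanti hη)
  have hEb : -V eplus ≤ E (ξ₀ + ε/2) :=
    le_of_tendsto hEtop ((eventually_ge_atTop (ξ₀ + ε/2)).mono fun η hη => hEanti hη)
  have hstep : E (ξ₀ + ε/2) < E ξ₀ :=
    hanti (Set.left_mem_Icc.mpr hab.le) (Set.right_mem_Icc.mpr hab.le) hab
  have hlt : V eminus < V eplus := by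
    have h1 := lt_of_le_of_lt hEb hstep
    have h2 := lt_of_lt_of_le h1 hEa
    linarith
  exact ⟨fun h => by rw [h] at hlt; exact lt_irrefl _ hlt, hlt⟩
end

section
/- Let V : ℝ^d → ℝ be C², let c ∈ ℝ, and let u : ℝ → ℝ^d be a global solution of ü = -c u̇ + ∇V(u) converging to critical points e₋ and e₊ of V at -∞ and +∞ respectively. If c ≠ 0, then u̇(ξ) → 0 as ξ → ±∞. -/
set_option maxHeartbeats 1000000

open Filter Set
open scoped RealInnerProductSpace

private lemma mvt_low {f f' : ℝ → ℝ} (hf : ∀ z, HasDerivAt f (f' z) z) {a x y : ℝ}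
    (hxy : x ≤ y) (h : ∀ z, x ≤ z → z ≤ y → a ≤ f' z) : a * (y - x) ≤ f y - f x := by
  have hd : Differentiable ℝ f := fun z => (hf z).differentiableAt
  refine (convex_Icc x y).mul_sub_le_image_sub_of_le_deriv hd.continuous.continuousOn
    hd.differentiableOn (fun z hz => ?_) x ⟨le_refl x, hxy⟩ y ⟨hxy, le_refl y⟩ hxy
  rw [interior_Icc] at hz
  rw [(hf z).deriv]
  exact h z hz.1.le hz.2.le

private lemma mvt_up {f f' : ℝ → ℝ} (hf : ∀ z, HasDerivAt f (f' z) z) {b x y : ℝ}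
    (hxy : x ≤ y) (h : ∀ z, x ≤ z → z ≤ y → f' z ≤ b) : f y - f x ≤ b * (y - x) := by
  have := mvt_low (f := fun z => -f z) (f' := fun z => -f' z)
    (fun z => (hf z).neg) (a := -b) hxy (fun z hz1 hz2 => neg_le_neg (h z hz1 hz2))
  simp only [neg_mul] at this
  linarith

private lemma bdd_of_tendsto {f : ℝ → ℝ} (hf : Continuous f) {a b : ℝ}
    (h1 : Tendsto f atBot (nhds a)) (h2 : Tendsto f atTop (nhds b)) :
    ∃ M, ∀ x, |f x| ≤ M := by
  obtain ⟨T1, hT1⟩ := eventually_atBot.1 (h1.eventually (Metric.closedBall_mem_nhds a one_pos))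
  obtain ⟨T2, hT2⟩ := eventually_atTop.1 (h2.eventually (Metric.closedBall_mem_nhds b one_pos))
  obtain ⟨C, hC⟩ := (isCompact_Icc (a := T1) (b := T2)).exists_bound_of_continuousOn
    hf.continuousOn
  refine ⟨max C (max (|a| + 1) (|b| + 1)), fun x => ?_⟩
  rcases le_total x T1 with hx | hx
  · have := hT1 x hx
    rw [Real.dist_eq] at this
    have : |f x| ≤ |a| + 1 := by
      calc |f x| = |(f x - a) + a| := by ring_nf
        _ ≤ |f x - a| + |a| := abs_add_le _ _
        _ ≤ |a| + 1 := by linarith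
    exact le_trans this (le_trans (le_max_left _ _) (le_max_right _ _))
  rcases le_total T2 x with hx2 | hx2
  · have := hT2 x hx2
    rw [Real.dist_eq] at this
    have : |f x| ≤ |b| + 1 := by
      calc |f x| = |(f x - b) + b| := by ring_nf
        _ ≤ |f x - b| + |b| := abs_add_le _ _
        _ ≤ |b| + 1 := by linarith
    exact le_trans this (le_trans (le_max_right _ _) (le_max_right _ _))
  · exact le_trans (hC x ⟨hx, hx2⟩) (le_max_left _ _)

private lemma aux_main {d : ℕ}
    (V : EuclideanSpace ℝ (Fin d) → ℝ) (hV : ContDiff ℝ 2 V)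
    (c : ℝ) (hc : 0 < c) (u du : ℝ → EuclideanSpace ℝ (Fin d))
    (hu : ∀ ξ, HasDerivAt u (du ξ) ξ)
    (hdu : ∀ ξ, HasDerivAt du (-c • du ξ + gradient V (u ξ)) ξ)
    (eminus eplus : EuclideanSpace ℝ (Fin d))
    (heMinus : gradient V eminus = 0)
    (huBot : Tendsto u atBot (nhds eminus)) (huTop : Tendsto u atTop (nhds eplus)) :
    Tendsto du atBot (nhds 0) ∧ Tendsto du atTop (nhds 0) := by
  classical
  set m : ℝ → ℝ := fun ξ => ⟪du ξ, du ξ⟫ with hm_def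
  have hm0 : ∀ ξ, 0 ≤ m ξ := fun ξ => real_inner_self_nonneg
  have hmnorm : ∀ ξ, m ξ = ‖du ξ‖ ^ 2 := fun ξ => real_inner_self_eq_norm_sq _
  have hVdiff : Differentiable ℝ V := hV.differentiable (by norm_num)
  have hVu : ∀ ξ, HasDerivAt (fun t => V (u t)) ⟪gradient V (u ξ), du ξ⟫ ξ := by
    intro ξ
    have h1 := (hVdiff (u ξ)).hasGradientAt
    have h2 := h1.hasFDerivAt.comp_hasDerivAt ξ (hu ξ)
    simpa [InnerProductSpace.toDual_apply_apply, Function.comp_def] using h2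
  set H : ℝ → ℝ := fun ξ => m ξ / 2 - V (u ξ) with hH_def
  have hH : ∀ ξ, HasDerivAt H (-c * m ξ) ξ := by
    intro ξ
    have h1 : HasDerivAt (fun t => (⟪du t, du t⟫ : ℝ))
        (⟪du ξ, -c • du ξ + gradient V (u ξ)⟫ + ⟪-c • du ξ + gradient V (u ξ), du ξ⟫) ξ :=
      (hdu ξ).inner ℝ (hdu ξ)
    have h2 := (h1.div_const 2).sub (hVu ξ)
    refine h2.congr_deriv ?_
    simp only [inner_add_left, inner_add_right, real_inner_smul_left, real_inner_smul_right,
      real_inner_comm (du ξ) (gradient V (u ξ))]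
    ring
  have hucont : Continuous u := by
    rw [continuous_iff_continuousAt]; exact fun ξ => (hu ξ).continuousAt
  have hVb : Tendsto (fun ξ => V (u ξ)) atBot (nhds (V eminus)) :=
    (hV.continuous.tendsto _).comp huBot
  have hVt : Tendsto (fun ξ => V (u ξ)) atTop (nhds (V eplus)) :=
    (hV.continuous.tendsto _).comp huTop
  obtain ⟨M, hM⟩ := bdd_of_tendsto (hV.continuous.comp hucont) hVb hVt
  have hanti : Antitone H := by
    apply antitone_of_deriv_nonpos (fun ξ => (hH ξ).differentiableAt)
    intro ξ
    rw [(hH ξ).deriv]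
    have := hm0 ξ
    nlinarith
  have hHlb : ∀ ξ, -M ≤ H ξ := by
    intro ξ
    have h1 := abs_le.1 (hM ξ)
    have h2 := hm0 ξ
    simp only [hH_def]
    dsimp only [Function.comp] at h1
    linarith [h1.2]
  -- a reusable step: if m converges to a positive limit on a side, contradiction setup
  -- atTop part
  have htop : Tendsto du atTop (nhds 0) := by
    have hbb : BddBelow (Set.range H) := ⟨-M, by rintro _ ⟨ξ, rfl⟩; exact hHlb ξ⟩
    have hHt : Tendsto H atTop (nhds (⨅ ξ, H ξ)) := tendsto_atTop_ciInf hanti hbb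
    set L := ⨅ ξ, H ξ with hL
    have hmeq : ∀ ξ, m ξ = 2 * H ξ + 2 * V (u ξ) := by
      intro ξ; simp only [hH_def]; ring
    have hmt : Tendsto m atTop (nhds (2 * L + 2 * V eplus)) := by
      have := (hHt.const_mul 2).add (hVt.const_mul 2)
      simpa using this.congr (fun ξ => (hmeq ξ).symm)
    set l := 2 * L + 2 * V eplus with hl_def
    have hl0 : 0 ≤ l := ge_of_tendsto hmt (Eventually.of_forall hm0)
    have hl : l = 0 := by
      by_contra hne
      have hlpos : 0 < l := lt_of_le_of_ne hl0 (Ne.symm hne)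
      obtain ⟨T, hT⟩ := eventually_atTop.1 (hmt.eventually_const_le (by linarith : l / 2 < l))
      have hk : 0 < c * (l / 2) := by positivity
      set D := (H T + M + 1) / (c * (l / 2)) with hD_def
      have hD0 : 0 < D := by
        apply div_pos _ hk
        linarith [hHlb T]
      have hmvt := mvt_up hH (b := -(c * (l / 2))) (x := T) (y := T + D) (by linarith)
        (fun z hz1 _ => by
          have := hT z hz1
          nlinarith)
      have : H (T + D) - H T ≤ -(H T + M + 1) := by
        rw [hD_def] at hmvt ⊢
        calc H (T + D) - H T ≤ -(c * (l / 2)) * (T + (H T + M + 1) / (c * (l / 2)) - T) := by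
              simpa [hD_def] using hmvt
          _ = -(H T + M + 1) := by field_simp; ring
      linarith [hHlb (T + D)]
    have hmz : Tendsto m atTop (nhds 0) := hl ▸ hmt
    have hnorm : Tendsto (fun ξ => ‖du ξ‖) atTop (nhds 0) := by
      have h := (Real.continuous_sqrt.tendsto 0).comp hmz
      rw [Real.sqrt_zero] at h
      refine h.congr fun ξ => ?_
      simp only [Function.comp_apply]
      rw [hmnorm ξ, Real.sqrt_sq (norm_nonneg _)]
    exact tendsto_zero_iff_norm_tendsto_zero.2 hnorm
  refine ⟨?_, htop⟩
  by_cases hba : BddAbove (Set.range H)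
  · -- H bounded above: converges at -∞, mirror the atTop argument
    obtain ⟨S', hS'⟩ := hba
    have hS'H : ∀ ξ, H ξ ≤ S' := fun ξ => hS' ⟨ξ, rfl⟩
    have hHt : Tendsto H atBot (nhds (⨆ ξ, H ξ)) :=
      tendsto_atBot_ciSup hanti ⟨S', hS'⟩
    set S := ⨆ ξ, H ξ with hS
    have hmeq : ∀ ξ, m ξ = 2 * H ξ + 2 * V (u ξ) := by
      intro ξ; simp only [hH_def]; ring
    have hmt : Tendsto m atBot (nhds (2 * S + 2 * V eminus)) := by
      have := (hHt.const_mul 2).add (hVb.const_mul 2)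
      simpa using this.congr (fun ξ => (hmeq ξ).symm)
    set l := 2 * S + 2 * V eminus with hl_def
    have hl0 : 0 ≤ l := ge_of_tendsto hmt (Eventually.of_forall hm0)
    have hl : l = 0 := by
      by_contra hne
      have hlpos : 0 < l := lt_of_le_of_ne hl0 (Ne.symm hne)
      obtain ⟨T, hT⟩ := eventually_atBot.1 (hmt.eventually_const_le (by linarith : l / 2 < l))
      have hk : 0 < c * (l / 2) := by positivity
      set D := (S' - H T + 1) / (c * (l / 2)) with hD_def
      have hD0 : 0 < D := by
        apply div_pos _ hk
        linarith [hS'H T]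
      have hmvt := mvt_up hH (b := -(c * (l / 2))) (x := T - D) (y := T) (by linarith)
        (fun z _ hz2 => by
          have := hT z (by linarith)
          nlinarith)
      have hDeq : c * (l / 2) * D = S' - H T + 1 := by
        rw [hD_def]; field_simp
      have hTD : T - (T - D) = D := by ring
      rw [hTD, neg_mul, hDeq] at hmvt
      have : S' + 1 ≤ H (T - D) := by linarith
      linarith [hS'H (T - D)]
    have hmz : Tendsto m atBot (nhds 0) := hl ▸ hmt
    have hnorm : Tendsto (fun ξ => ‖du ξ‖) atBot (nhds 0) := by
      have h := (Real.continuous_sqrt.tendsto 0).comp hmz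
      rw [Real.sqrt_zero] at h
      refine h.congr fun ξ => ?_
      simp only [Function.comp_apply]
      rw [hmnorm ξ, Real.sqrt_sq (norm_nonneg _)]
    exact tendsto_zero_iff_norm_tendsto_zero.2 hnorm
  · -- H unbounded above: derive a contradiction
    exfalso
    have hHtop : Tendsto H atBot atTop := by
      rw [tendsto_atTop]
      intro b
      obtain ⟨y, ⟨ξ0, rfl⟩, hby⟩ := not_bddAbove_iff.1 hba b
      filter_upwards [eventually_le_atBot ξ0] with ξ hξ
      exact le_trans hby.le (hanti hξ)
    have hmtop : Tendsto m atBot atTop := by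
      apply tendsto_atTop_mono (f := fun ξ => 2 * H ξ + -(2 * M))
      · intro ξ
        have h1 := abs_le.1 (hM ξ)
        simp only [Function.comp_apply] at h1
        have : m ξ = 2 * H ξ + 2 * V (u ξ) := by simp only [hH_def]; ring
        linarith [h1.2]
      · exact tendsto_atTop_add_const_right _ (-(2 * M)) (hHtop.const_mul_atTop two_pos)
    have h1 : ∀ᶠ ξ in atBot, ‖u ξ - eminus‖ ≤ 1 := by
      filter_upwards [huBot.eventually (Metric.closedBall_mem_nhds eminus one_pos)] with ξ hξ
      rwa [dist_eq_norm] at hξ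
    have hgradcont : Continuous (fun x : EuclideanSpace ℝ (Fin d) => gradient V x) := by
      have h := hV.continuous_fderiv (by norm_num)
      exact (InnerProductSpace.toDual ℝ (EuclideanSpace ℝ (Fin d))).symm.continuous.comp h
    have h2 : ∀ᶠ ξ in atBot, ‖gradient V (u ξ)‖ ≤ 1 := by
      have ht : Tendsto (fun ξ => gradient V (u ξ)) atBot (nhds 0) := by
        have := (hgradcont.tendsto eminus).comp huBot
        rwa [heMinus] at this
      filter_upwards [ht.eventually (Metric.closedBall_mem_nhds 0 one_pos)] with ξ hξ
      rwa [dist_zero_right] at hξ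
    have h3 : ∀ᶠ ξ in atBot, 4 ≤ m ξ := hmtop.eventually (eventually_ge_atTop 4)
    have h4 : ∀ᶠ ξ in atBot, (2 * c) ^ 2 ≤ m ξ := hmtop.eventually (eventually_ge_atTop _)
    obtain ⟨T, hT⟩ := eventually_atBot.1 ((h1.and h2).and (h3.and h4))
    set p : ℝ → ℝ := fun ξ => ⟪u ξ - eminus, du ξ⟫ with hp_def
    have hp : ∀ ξ, HasDerivAt p
        (⟪u ξ - eminus, -c • du ξ + gradient V (u ξ)⟫ + m ξ) ξ := by
      intro ξ
      exact ((hu ξ).sub_const eminus).inner ℝ (hdu ξ)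
    have hpbound : ∀ ξ ≤ T, 1 ≤ ⟪u ξ - eminus, -c • du ξ + gradient V (u ξ)⟫ + m ξ := by
      intro ξ hξ
      obtain ⟨⟨hb1, hb2⟩, hb3, hb4⟩ := hT ξ hξ
      have hcs : |(⟪u ξ - eminus, -c • du ξ + gradient V (u ξ)⟫ : ℝ)| ≤
          ‖u ξ - eminus‖ * ‖-c • du ξ + gradient V (u ξ)‖ := abs_real_inner_le_norm _ _
      have hn : ‖-c • du ξ + gradient V (u ξ)‖ ≤ c * ‖du ξ‖ + 1 := by
        calc ‖-c • du ξ + gradient V (u ξ)‖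
            ≤ ‖-c • du ξ‖ + ‖gradient V (u ξ)‖ := norm_add_le _ _
          _ = |(-c)| * ‖du ξ‖ + ‖gradient V (u ξ)‖ := by rw [norm_smul, Real.norm_eq_abs]
          _ ≤ c * ‖du ξ‖ + 1 := by rw [abs_neg, abs_of_pos hc]; linarith
      have hprod : ‖u ξ - eminus‖ * ‖-c • du ξ + gradient V (u ξ)‖ ≤ c * ‖du ξ‖ + 1 := by
        calc ‖u ξ - eminus‖ * ‖-c • du ξ + gradient V (u ξ)‖
            ≤ 1 * ‖-c • du ξ + gradient V (u ξ)‖ :=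
              mul_le_mul_of_nonneg_right hb1 (norm_nonneg _)
          _ = ‖-c • du ξ + gradient V (u ξ)‖ := one_mul _
          _ ≤ c * ‖du ξ‖ + 1 := hn
      have hdu2 : 2 * c ≤ ‖du ξ‖ := by
        nlinarith [hmnorm ξ, norm_nonneg (du ξ)]
      have hcd : c * ‖du ξ‖ ≤ m ξ / 2 := by
        rw [hmnorm ξ]
        nlinarith [norm_nonneg (du ξ)]
      have hip := neg_abs_le (⟪u ξ - eminus, -c • du ξ + gradient V (u ξ)⟫ : ℝ)
      linarith
    have hpd : ∀ ξ ≤ T, p ξ ≤ p T - (T - ξ) := by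
      intro ξ hξ
      have := mvt_low hp (a := 1) (x := ξ) (y := T) hξ (fun z _ hz2 => hpbound z hz2)
      linarith
    obtain ⟨T2, hpneg⟩ : ∃ T2, ∀ ξ ≤ T2, p ξ ≤ -1 := by
      refine ⟨min T (T - p T - 1), fun ξ hξ => ?_⟩
      have h1' := hpd ξ (le_trans hξ (min_le_left _ _))
      have h2' : ξ ≤ T - p T - 1 := le_trans hξ (min_le_right _ _)
      linarith
    set q : ℝ → ℝ := fun ξ => ⟪u ξ - eminus, u ξ - eminus⟫ with hq_def
    have hq : ∀ ξ, HasDerivAt q (2 * p ξ) ξ := by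
      intro ξ
      have h := ((hu ξ).sub_const eminus).inner ℝ ((hu ξ).sub_const eminus)
      refine h.congr_deriv ?_
      simp only [hp_def]
      rw [real_inner_comm (u ξ - eminus) (du ξ)]
      ring
    have hq0 : (0 : ℝ) ≤ q T2 := real_inner_self_nonneg
    have hqlow : ∀ ξ ≤ T2, q T2 - q ξ ≤ -2 * (T2 - ξ) := by
      intro ξ hξ
      exact mvt_up hq (b := -2) hξ (fun z _ hz2 => by have := hpneg z hz2; linarith)
    have hqz : Tendsto q atBot (nhds 0) := by
      have hsub : Tendsto (fun ξ => u ξ - eminus) atBot (nhds 0) := by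
        simpa [sub_self] using huBot.sub (tendsto_const_nhds (x := eminus))
      simpa only [inner_zero_left] using hsub.inner (𝕜 := ℝ) hsub
    obtain ⟨T3, hT3⟩ := eventually_atBot.1 (hqz.eventually_le_const zero_lt_one)
    have e1 : q (min T3 (T2 - 1)) ≤ 1 := hT3 _ (min_le_left _ _)
    have e2 : q T2 - q (min T3 (T2 - 1)) ≤ -2 * (T2 - min T3 (T2 - 1)) := hqlow _ (by
      have := min_le_right T3 (T2 - 1); linarith)
    have e3 : T2 - min T3 (T2 - 1) ≥ 1 := by
      have := min_le_right T3 (T2 - 1); linarith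
    nlinarith [e1, e2, e3, hq0]

theorem derivative_tends_to_zero_at_both_ends {d : ℕ}
    (V : EuclideanSpace ℝ (Fin d) → ℝ) (hV : ContDiff ℝ 2 V)
    (c : ℝ) (hc : c ≠ 0) (u du : ℝ → EuclideanSpace ℝ (Fin d))
    (hu : ∀ ξ, HasDerivAt u (du ξ) ξ)
    (hdu : ∀ ξ, HasDerivAt du (-c • du ξ + gradient V (u ξ)) ξ)
    (eminus eplus : EuclideanSpace ℝ (Fin d))
    (heMinus : gradient V eminus = 0) (hePlus : gradient V eplus = 0)
    (huBot : Tendsto u atBot (nhds eminus)) (huTop : Tendsto u atTop (nhds eplus)) :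
    Tendsto du atBot (nhds 0) ∧ Tendsto du atTop (nhds 0) := by
  rcases hc.lt_or_gt with hneg | hpos
  · have hcpos : 0 < -c := by linarith
    have hv : ∀ ξ, HasDerivAt (fun t => u (-t)) ((fun t => -du (-t)) ξ) ξ := by
      intro ξ
      have h := (hu (-ξ)).scomp ξ (hasDerivAt_neg ξ)
      simpa [Function.comp_def] using h
    have hw : ∀ ξ, HasDerivAt (fun t => -du (-t))
        (-(-c) • (fun t => -du (-t)) ξ + gradient V ((fun t => u (-t)) ξ)) ξ := by
      intro ξ
      have h := ((hdu (-ξ)).scomp ξ (hasDerivAt_neg ξ)).neg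
      refine h.congr_deriv ?_
      simp only [neg_neg]
      module
    have hvBot : Tendsto (fun t => u (-t)) atBot (nhds eplus) :=
      huTop.comp tendsto_neg_atBot_atTop
    have hvTop : Tendsto (fun t => u (-t)) atTop (nhds eminus) :=
      huBot.comp tendsto_neg_atTop_atBot
    obtain ⟨hwBot, hwTop⟩ := aux_main V hV (-c) hcpos (fun t => u (-t)) (fun t => -du (-t))
      hv hw eplus eminus hePlus hvBot hvTop
    constructor
    · have h := (hwTop.comp tendsto_neg_atBot_atTop).neg
      simp only [Function.comp] at h
      simpa using h
    · have h := (hwBot.comp tendsto_neg_atTop_atBot).neg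
      simp only [Function.comp] at h
      simpa using h
  · exact aux_main V hV c hpos u du hu hdu eminus eplus heMinus huBot huTop
end

section
/- Let V : ℝ^d → ℝ be C² with V(u) = |u|²/2 for all |u| ≥ R (R > 0), let c ≥ 0, and let u : ℝ → ℝ^d be a global solution of ü = -c u̇ + ∇V(u) that converges to critical points of V at both ends of ℝ. Then sup_{ξ∈ℝ} |u(ξ)| < R. -/
open Filter

local notation "⟪" x ", " y "⟫" => @inner ℝ _ _ x y

lemma half_norm_sq_hasGradientAt {d : ℕ} (y : EuclideanSpace ℝ (Fin d)) :
    HasGradientAt (fun x : EuclideanSpace ℝ (Fin d) => ‖x‖ ^ 2 / 2) y y := by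
  rw [hasGradientAt_iff_hasFDerivAt]
  have h2 := (hasStrictFDerivAt_norm_sq y).hasFDerivAt.const_smul ((2:ℝ)⁻¹)
  have h3 : ((2:ℝ)⁻¹ • fun x : EuclideanSpace ℝ (Fin d) => ‖x‖ ^ 2) =
      fun x : EuclideanSpace ℝ (Fin d) => ‖x‖ ^ 2 / 2 := by
    funext x; simp only [Pi.smul_apply, smul_eq_mul]; ring
  rw [h3] at h2
  refine h2.congr_fderiv ?_
  ext z
  simp [InnerProductSpace.toDual_apply_apply, two_smul, real_inner_comm, smul_eq_mul]
  ring

lemma grad_eq_of_quad {d : ℕ} (V : EuclideanSpace ℝ (Fin d) → ℝ) (hV : ContDiff ℝ 2 V)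
    (R : ℝ) (hR : 0 < R)
    (hquad : ∀ x : EuclideanSpace ℝ (Fin d), R ≤ ‖x‖ → V x = ‖x‖ ^ 2 / 2) :
    ∀ x : EuclideanSpace ℝ (Fin d), R ≤ ‖x‖ → gradient V x = x := by
  -- first, strict inequality case
  have hgt : ∀ x : EuclideanSpace ℝ (Fin d), R < ‖x‖ → gradient V x = x := by
    intro x hx
    have hev : V =ᶠ[nhds x] (fun y => ‖y‖ ^ 2 / 2) := by
      have hopen : IsOpen {y : EuclideanSpace ℝ (Fin d) | R < ‖y‖} :=
        isOpen_lt continuous_const continuous_norm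
      filter_upwards [hopen.mem_nhds hx] with y hy
      exact hquad y hy.le
    rw [hev.gradient_eq, (half_norm_sq_hasGradientAt x).gradient]
  intro x hx
  have hxpos : 0 < ‖x‖ := lt_of_lt_of_le hR hx
  have hgc : Continuous (gradient V) := by
    have hf := hV.continuous_fderiv (by norm_num)
    exact (InnerProductSpace.toDual ℝ _).symm.continuous.comp hf
  have h1 : Tendsto (fun t : ℝ => gradient V (t • x)) (nhdsWithin 1 (Set.Ioi 1))
      (nhds (gradient V ((1:ℝ) • x))) :=
    ((hgc.comp (continuous_id.smul continuous_const)).tendsto 1).mono_left nhdsWithin_le_nhds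
  have h2 : Tendsto (fun t : ℝ => t • x) (nhdsWithin 1 (Set.Ioi 1)) (nhds ((1:ℝ) • x)) :=
    ((continuous_id.smul continuous_const).tendsto 1).mono_left nhdsWithin_le_nhds
  have heq : (fun t : ℝ => gradient V (t • x)) =ᶠ[nhdsWithin 1 (Set.Ioi 1)]
      (fun t : ℝ => t • x) := by
    filter_upwards [self_mem_nhdsWithin] with t ht
    apply hgt
    have : ‖t • x‖ = t * ‖x‖ := by
      rw [norm_smul, Real.norm_eq_abs, abs_of_pos (lt_trans one_pos ht)]
    rw [this]
    calc R ≤ ‖x‖ := hx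
    _ = 1 * ‖x‖ := by ring
    _ < t * ‖x‖ := by exact mul_lt_mul_of_pos_right ht hxpos
  have := tendsto_nhds_unique (h1.congr' heq) h2
  simpa using this


lemma key_pointwise {d : ℕ}
    (V : EuclideanSpace ℝ (Fin d) → ℝ)
    (R : ℝ) (hR : 0 < R)
    (hgrad : ∀ x : EuclideanSpace ℝ (Fin d), R ≤ ‖x‖ → gradient V x = x)
    (c : ℝ) (u du : ℝ → EuclideanSpace ℝ (Fin d))
    (hu : ∀ ξ, HasDerivAt u (du ξ) ξ)
    (hdu : ∀ ξ, HasDerivAt du (-c • du ξ + gradient V (u ξ)) ξ)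
    (eminus eplus : EuclideanSpace ℝ (Fin d))
    (hem : ‖eminus‖ < R) (hep : ‖eplus‖ < R)
    (huBot : Tendsto u atBot (nhds eminus)) (huTop : Tendsto u atTop (nhds eplus)) :
    ∀ ξ : ℝ, ‖u ξ‖ < R := by
  by_contra hcon
  push_neg at hcon
  obtain ⟨ξ₀, hξ₀⟩ := hcon
  set f : ℝ → ℝ := fun ξ => ‖u ξ‖ ^ 2 with hf
  have hucont : Continuous u := continuous_iff_continuousAt.mpr fun ξ => (hu ξ).continuousAt
  have hfc : Continuous f := (hucont.norm).pow 2
  have hfd : ∀ ξ, HasDerivAt f (2 * ⟪u ξ, du ξ⟫) ξ := fun ξ => (hu ξ).norm_sq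
  have hfξ₀ : R ^ 2 ≤ f ξ₀ := by
    simpa [hf] using pow_le_pow_left₀ hR.le hξ₀ 2
  -- f has a global max
  have hfBot : Tendsto f atBot (nhds (‖eminus‖ ^ 2)) :=
    ((continuous_norm.pow 2).tendsto eminus).comp huBot
  have hfTop : Tendsto f atTop (nhds (‖eplus‖ ^ 2)) :=
    ((continuous_norm.pow 2).tendsto eplus).comp huTop
  have hevco : ∀ᶠ ξ in cocompact ℝ, f ξ ≤ f ξ₀ := by
    rw [cocompact_eq_atBot_atTop, eventually_sup]
    constructor
    · filter_upwards [hfBot.eventually_lt_const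
        (show ‖eminus‖ ^ 2 < R ^ 2 from by nlinarith [norm_nonneg eminus])] with ξ h
      linarith
    · filter_upwards [hfTop.eventually_lt_const
        (show ‖eplus‖ ^ 2 < R ^ 2 from by nlinarith [norm_nonneg eplus])] with ξ h
      linarith
  obtain ⟨m, hm⟩ := hfc.exists_forall_ge' ξ₀ hevco
  -- at the max point
  have hRm : R ≤ ‖u m‖ := by
    have h1 : R ^ 2 ≤ f m := le_trans hfξ₀ (hm ξ₀)
    have h2 : R ^ 2 ≤ ‖u m‖ ^ 2 := by simpa [hf] using h1
    nlinarith [norm_nonneg (u m)]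
  have hmax : IsLocalMax f m := Filter.Eventually.of_forall hm
  have hp0 : ⟪u m, du m⟫ = 0 := by
    have := hmax.hasDerivAt_eq_zero (hfd m)
    linarith
  -- second derivative
  set p : ℝ → ℝ := fun ξ => ⟪u ξ, du ξ⟫ with hpdef
  have hpd : ∀ ξ, HasDerivAt p (⟪u ξ, -c • du ξ + gradient V (u ξ)⟫ + ⟪du ξ, du ξ⟫) ξ :=
    fun ξ => (hu ξ).inner ℝ (hdu ξ)
  have hA : HasDerivAt p (‖u m‖ ^ 2 + ‖du m‖ ^ 2 - c * ⟪u m, du m⟫) m := by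
    have := hpd m
    rw [hgrad (u m) hRm] at this
    convert this using 1
    rw [inner_add_right, inner_smul_right, real_inner_self_eq_norm_sq,
      real_inner_self_eq_norm_sq]
    ring
  have hApos : 0 < ‖u m‖ ^ 2 + ‖du m‖ ^ 2 - c * ⟪u m, du m⟫ := by
    rw [hp0]
    nlinarith [sq_nonneg ‖du m‖]
  -- p > 0 on a right interval of m
  have hslope : Tendsto (slope p m) (nhdsWithin m {m}ᶜ)
      (nhds (‖u m‖ ^ 2 + ‖du m‖ ^ 2 - c * ⟪u m, du m⟫)) :=
    hasDerivAt_iff_tendsto_slope.mp hA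
  have hev : ∀ᶠ t in nhdsWithin m {m}ᶜ, 0 < slope p m t :=
    hslope.eventually_const_lt hApos
  have hev2 : ∀ᶠ t in nhdsWithin m (Set.Ioi m), 0 < p t := by
    have hle : nhdsWithin m (Set.Ioi m) ≤ nhdsWithin m {m}ᶜ :=
      nhdsWithin_mono m (fun t ht => ne_of_gt ht)
    filter_upwards [hle hev, self_mem_nhdsWithin] with t ht ht2
    have hslope_eq : slope p m t = (p t - p m) / (t - m) := by
      rw [slope_def_field]
    rw [hslope_eq] at ht
    have := mul_pos ht (sub_pos.mpr (ht2 : m < t))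
    rw [div_mul_cancel₀ _ (ne_of_gt (sub_pos.mpr (ht2 : m < t)))] at this
    have hpm : p m = 0 := hp0
    linarith
  obtain ⟨b, hb, hball⟩ := (nhdsGT_basis m).eventually_iff.mp hev2
  set b2 : ℝ := (m + b) / 2 with hb2def
  have hmb2 : m < b2 := by rw [hb2def]; linarith
  have hb2b : b2 < b := by rw [hb2def]; linarith
  have hmono : StrictMonoOn f (Set.Icc m b2) := by
    apply strictMonoOn_of_deriv_pos (convex_Icc m b2) (hfc.continuousOn)
    intro x hx
    rw [interior_Icc] at hx
    rw [(hfd x).deriv]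
    have hpx : 0 < p x := hball ⟨hx.1, lt_trans hx.2 hb2b⟩
    rw [hpdef] at hpx
    linarith
  have hlt := hmono (Set.left_mem_Icc.mpr hmb2.le) (Set.right_mem_Icc.mpr hmb2.le) hmb2
  exact absurd (hm b2) (not_le.mpr hlt)

theorem a_priori_bound_on_profiles {d : ℕ}
    (V : EuclideanSpace ℝ (Fin d) → ℝ) (hV : ContDiff ℝ 2 V)
    (R : ℝ) (hR : 0 < R)
    (hquad : ∀ x : EuclideanSpace ℝ (Fin d), R ≤ ‖x‖ → V x = ‖x‖ ^ 2 / 2)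
    (c : ℝ) (hc : 0 ≤ c) (u du : ℝ → EuclideanSpace ℝ (Fin d))
    (hu : ∀ ξ, HasDerivAt u (du ξ) ξ)
    (hdu : ∀ ξ, HasDerivAt du (-c • du ξ + gradient V (u ξ)) ξ)
    (eminus eplus : EuclideanSpace ℝ (Fin d))
    (heMinus : gradient V eminus = 0) (hePlus : gradient V eplus = 0)
    (huBot : Tendsto u atBot (nhds eminus)) (huTop : Tendsto u atTop (nhds eplus)) :
    sSup (Set.range fun ξ : ℝ => ‖u ξ‖) < R := by
  have hgrad := grad_eq_of_quad V hV R hR hquad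
  -- critical points lie strictly inside the ball
  have hem : ‖eminus‖ < R := by
    by_contra h
    push_neg at h
    have := hgrad eminus h
    rw [heMinus] at this
    rw [← this] at h
    simp at h
    linarith
  have hep : ‖eplus‖ < R := by
    by_contra h
    push_neg at h
    have := hgrad eplus h
    rw [hePlus] at this
    rw [← this] at h
    simp at h
    linarith
  have key := key_pointwise V R hR hgrad c u du hu hdu eminus eplus hem hep huBot huTop
  -- uniform bound strictly below R
  set r : ℝ := (max ‖eminus‖ ‖eplus‖ + R) / 2 with hrdef
  have hrR : r < R := by
    rw [hrdef]
    have := max_lt hem hep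
    linarith
  have hrpos : 0 ≤ r := by
    rw [hrdef]
    have := le_max_left ‖eminus‖ ‖eplus‖
    positivity
  have hnormBot : Tendsto (fun ξ => ‖u ξ‖) atBot (nhds ‖eminus‖) :=
    (continuous_norm.tendsto eminus).comp huBot
  have hnormTop : Tendsto (fun ξ => ‖u ξ‖) atTop (nhds ‖eplus‖) :=
    (continuous_norm.tendsto eplus).comp huTop
  have hemr : ‖eminus‖ < r := by
    rw [hrdef]; have := le_max_left ‖eminus‖ ‖eplus‖; linarith
  have hepr : ‖eplus‖ < r := by
    rw [hrdef]; have := le_max_right ‖eminus‖ ‖eplus‖; linarith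
  obtain ⟨T₁, hT₁⟩ := (hnormBot.eventually_lt_const hemr).exists_forall_of_atBot
  obtain ⟨T₂, hT₂⟩ := (hnormTop.eventually_lt_const hepr).exists_forall_of_atTop
  set T₂' : ℝ := max T₁ T₂ with hT2'def
  have hucont : Continuous u := continuous_iff_continuousAt.mpr fun ξ => (hu ξ).continuousAt
  have hne : (Set.Icc T₁ T₂').Nonempty := ⟨T₁, Set.left_mem_Icc.mpr (le_max_left _ _)⟩
  obtain ⟨ξm, _, hξm⟩ := isCompact_Icc.exists_isMaxOn hne
    ((hucont.norm).continuousOn : ContinuousOn (fun ξ => ‖u ξ‖) (Set.Icc T₁ T₂'))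
  set b : ℝ := max r ‖u ξm‖ with hbdef
  have hbR : b < R := max_lt hrR (key ξm)
  have hbound : ∀ ξ, ‖u ξ‖ ≤ b := by
    intro ξ
    rcases le_or_gt ξ T₁ with h1 | h1
    · exact le_trans (hT₁ ξ h1).le (le_max_left _ _)
    · rcases le_or_gt ξ T₂' with h2 | h2
      · exact le_trans (hξm ⟨h1.le, h2⟩) (le_max_right _ _)
      · have h3 : T₂ ≤ ξ := le_of_lt (lt_of_le_of_lt (le_max_right T₁ T₂) h2)
        exact le_trans (hT₂ ξ h3).le (le_max_left _ _)
  have hb0 : 0 ≤ b := le_trans hrpos (le_max_left _ _)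
  have hsup : sSup (Set.range fun ξ : ℝ => ‖u ξ‖) ≤ b := by
    apply Real.sSup_le _ hb0
    rintro x ⟨ξ, rfl⟩
    exact hbound ξ
  exact lt_of_le_of_lt hsup hbR
end

section
/- Let V : ℝ^d → ℝ be C², let e be a critical point of V whose Hessian D²V(e) is invertible with at least one negative eigenvalue, and let u : ℝ → ℝ^d be a solution of ü = ∇V(u) with (u(ξ), u̇(ξ)) → (e, 0) as ξ → +∞. If π denotes the orthogonal projection onto the negative eigenspace of D²V(e), then it cannot hold that u(ξ) - e = π(u(ξ)-e) + o(|π(u(ξ)-e)|) as ξ → +∞ with π(u(ξ)-e) ≠ 0 along a sequence. In other words, the convergence cannot occur dominantly along the negative eigenspace of the Hessian. -/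
set_option maxHeartbeats 1000000

open Filter Asymptotics

open scoped RealInnerProductSpace


private lemma arith_aux (c K ε t A B G a b n : ℝ)
    (hc : 0 < c) (hK : 0 ≤ K) (hε : 0 < ε) (hε1 : ε ≤ 1) (hεK : ε * K ≤ c / 8)
    (ht0 : 0 < t)
    (hG : G = t * A + B)
    (hB : |B| ≤ c / 8 * (t * (n * n)))
    (hA : A ≤ -c * a ^ 2 + K * (2 * a * b + b ^ 2))
    (hba : b ≤ ε * a) (ha : 0 < a) (hb : 0 ≤ b) (hn : 0 ≤ n) (hna : n ≤ 2 * a) :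
    G < 0 := by
  have hc8 : 0 < c / 8 := by linarith
  have hba' : b ≤ a := by nlinarith
  have hstep : 2 * a * b + b ^ 2 ≤ 3 * ε * a ^ 2 := by
    have h1 : 0 ≤ (ε * a - b) * b := mul_nonneg (by linarith) hb
    have h2 : 0 ≤ (ε * a - b) * a := mul_nonneg (by linarith) ha.le
    have h4 : 0 ≤ ε * a * (a - b) :=
      mul_nonneg (mul_nonneg hε.le ha.le) (by linarith)
    nlinarith [h1, h2, h4]
  have hcross : K * (2 * a * b + b ^ 2) ≤ K * (3 * ε * a ^ 2) :=
    mul_le_mul_of_nonneg_left hstep hK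
  have hεH : K * (3 * ε * a ^ 2) ≤ 3 * (c / 8) * a ^ 2 := by
    have := mul_le_mul_of_nonneg_right hεK (sq_nonneg a)
    nlinarith [sq_nonneg a]
  have hA' : A ≤ -(5 * c / 8) * a ^ 2 := by nlinarith
  have hta : t * A ≤ t * (-(5 * c / 8) * a ^ 2) :=
    mul_le_mul_of_nonneg_left hA' ht0.le
  have hn2 : n * n ≤ 4 * a ^ 2 := by nlinarith
  have hBle : B ≤ c / 8 * (t * (4 * a ^ 2)) := by
    have h1 := (abs_le.mp hB).2
    have h2 : t * (n * n) ≤ t * (4 * a ^ 2) := mul_le_mul_of_nonneg_left hn2 ht0.le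
    have h3 := mul_le_mul_of_nonneg_left h2 hc8.le
    linarith
  have hneg : 0 < c / 8 * t * a ^ 2 := mul_pos (mul_pos hc8 ht0) (pow_pos ha 2)
  have hring : t * (-(5 * c / 8) * a ^ 2) + c / 8 * (t * (4 * a ^ 2))
      = -(c / 8 * t * a ^ 2) := by ring
  calc G = t * A + B := hG
    _ ≤ t * (-(5 * c / 8) * a ^ 2) + c / 8 * (t * (4 * a ^ 2)) := by linarith
    _ = -(c / 8 * t * a ^ 2) := hring
    _ < 0 := by linarith

theorem no_approach_along_negative_eigenspace {d : ℕ}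
    (V : EuclideanSpace ℝ (Fin d) → ℝ) (hV : ContDiff ℝ 2 V)
    (e : EuclideanSpace ℝ (Fin d)) (he : gradient V e = 0)
    (N : Submodule ℝ (EuclideanSpace ℝ (Fin d))) (hNbot : N ≠ ⊥)
    (hNinv : ∀ x ∈ N, fderiv ℝ (gradient V) e x ∈ N)
    (hNneg : ∀ x ∈ N, x ≠ 0 → ⟪fderiv ℝ (gradient V) e x, x⟫ < 0)
    (hPpos : ∀ x ∈ Nᗮ, x ≠ 0 → 0 < ⟪fderiv ℝ (gradient V) e x, x⟫)
    (u du : ℝ → EuclideanSpace ℝ (Fin d))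
    (hu : ∀ ξ, HasDerivAt u (du ξ) ξ)
    (hdu : ∀ ξ, HasDerivAt du (gradient V (u ξ)) ξ)
    (hlimu : Tendsto u atTop (nhds e)) (hlimdu : Tendsto du atTop (nhds 0))
    (hdom : (fun ξ : ℝ => (u ξ - e) - (Submodule.orthogonalProjection N (u ξ - e) :
        EuclideanSpace ℝ (Fin d))) =o[atTop]
      fun ξ : ℝ => (Submodule.orthogonalProjection N (u ξ - e) : EuclideanSpace ℝ (Fin d)))
    (hfreq : ∃ᶠ ξ in atTop,
      (Submodule.orthogonalProjection N (u ξ - e) : EuclideanSpace ℝ (Fin d)) ≠ 0) :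
    False := by
  classical
  set H := fderiv ℝ (gradient V) e with hHdef
  have hVd : Differentiable ℝ V := hV.differentiable two_ne_zero
  -- V ∘ u has derivative ⟪grad V (u ξ), du ξ⟫
  have hVu : ∀ ξ, HasDerivAt (fun ξ => V (u ξ)) (⟪gradient V (u ξ), du ξ⟫) ξ := by
    intro ξ
    have := ((hVd (u ξ)).hasGradientAt.hasFDerivAt).comp_hasDerivAt ξ (hu ξ)
    rw [← InnerProductSpace.toDual_apply_apply]; exact this
  -- energy conservation
  have hE : ∀ ξ, HasDerivAt (fun ξ => (1/2 : ℝ) * ⟪du ξ, du ξ⟫ - V (u ξ)) 0 ξ := by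
    intro ξ
    have h1 : HasDerivAt (fun ξ => ⟪du ξ, du ξ⟫)
        (⟪du ξ, gradient V (u ξ)⟫ + ⟪gradient V (u ξ), du ξ⟫) ξ :=
      (hdu ξ).inner ℝ (hdu ξ)
    have h2 := (h1.const_mul (1/2 : ℝ)).sub (hVu ξ)
    refine h2.congr_deriv ?_
    rw [real_inner_comm (du ξ) (gradient V (u ξ))]
    ring
  have hconst : ∀ ξ, (1/2:ℝ) * ⟪du ξ, du ξ⟫ - V (u ξ)
      = (1/2:ℝ) * ⟪du 0, du 0⟫ - V (u 0) := fun ξ =>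
    is_const_of_deriv_eq_zero (fun x => (hE x).differentiableAt)
      (fun x => (hE x).deriv) ξ 0
  have hlimE : Tendsto (fun ξ => (1/2:ℝ) * ⟪du ξ, du ξ⟫ - V (u ξ)) atTop
      (nhds ((1/2:ℝ) * ⟪(0 : EuclideanSpace ℝ (Fin d)), (0 : EuclideanSpace ℝ (Fin d))⟫ - V e)) :=
    ((hlimdu.inner hlimdu).const_mul _).sub ((hVd.continuous.tendsto e).comp hlimu)
  have hEval : (1/2:ℝ) * ⟪du 0, du 0⟫ - V (u 0) = - V e := by
    have h1 : Tendsto (fun _ : ℝ => (1/2:ℝ) * ⟪du 0, du 0⟫ - V (u 0)) atTop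
        (nhds ((1/2:ℝ) * ⟪du 0, du 0⟫ - V (u 0))) := tendsto_const_nhds
    have h2 := tendsto_nhds_unique ((tendsto_congr hconst).mp hlimE) h1
    simpa using h2.symm
  have hkey : ∀ ξ, V e ≤ V (u ξ) := by
    intro ξ
    have h := hconst ξ
    rw [hEval] at h
    nlinarith [(real_inner_self_nonneg : (0:ℝ) ≤ ⟪du ξ, du ξ⟫)]
  -- negative definiteness constant on N
  obtain ⟨x0, hx0N, hx0⟩ := Submodule.exists_mem_ne_zero_of_ne_bot hNbot
  have hScomp : IsCompact (Metric.sphere (0 : EuclideanSpace ℝ (Fin d)) 1 ∩ N) :=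
    (isCompact_sphere 0 1).inter_right N.closed_of_finiteDimensional
  have hx0n : ‖x0‖ ≠ 0 := norm_ne_zero_iff.2 hx0
  have hSne : (Metric.sphere (0 : EuclideanSpace ℝ (Fin d)) 1 ∩ N).Nonempty := by
    refine ⟨‖x0‖⁻¹ • x0, ?_, N.smul_mem _ hx0N⟩
    simp [norm_smul, inv_mul_cancel₀ hx0n]
  have hcont : ContinuousOn (fun x : EuclideanSpace ℝ (Fin d) => ⟪H x, x⟫)
      (Metric.sphere (0 : EuclideanSpace ℝ (Fin d)) 1 ∩ N) :=
    (H.continuous.inner continuous_id).continuousOn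
  obtain ⟨p0, hp0S, hp0max⟩ := hScomp.exists_isMaxOn hSne hcont
  have hp0ne : p0 ≠ 0 := by
    intro h
    have := hp0S.1
    rw [h] at this
    simp at this
  have hm : ⟪H p0, p0⟫ < 0 := hNneg p0 hp0S.2 hp0ne
  obtain ⟨c, hc, hquad⟩ : ∃ c : ℝ, 0 < c ∧ ∀ p ∈ N, ⟪H p, p⟫ ≤ -c * ‖p‖ ^ 2 := by
    refine ⟨-⟪H p0, p0⟫, by linarith, ?_⟩
    intro p hp
    rcases eq_or_ne p 0 with rfl | hpne
    · simp
    · have hn : ‖p‖ ≠ 0 := norm_ne_zero_iff.2 hpne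
      have hmem : ‖p‖⁻¹ • p ∈ Metric.sphere (0 : EuclideanSpace ℝ (Fin d)) 1 ∩ N :=
        ⟨by simp [norm_smul, inv_mul_cancel₀ hn], N.smul_mem _ hp⟩
      have h1 : ⟪H (‖p‖⁻¹ • p), ‖p‖⁻¹ • p⟫ ≤ ⟪H p0, p0⟫ := hp0max hmem
      rw [map_smul, real_inner_smul_left, real_inner_smul_right] at h1
      have hpos : (0:ℝ) < ‖p‖ ^ 2 := by positivity
      have h3 : ⟪H p, p⟫ = ‖p‖ ^ 2 * (‖p‖⁻¹ * (‖p‖⁻¹ * ⟪H p, p⟫)) := by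
        field_simp
      calc ⟪H p, p⟫ = ‖p‖ ^ 2 * (‖p‖⁻¹ * (‖p‖⁻¹ * ⟪H p, p⟫)) := h3
        _ ≤ ‖p‖ ^ 2 * ⟪H p0, p0⟫ := mul_le_mul_of_nonneg_left h1 (le_of_lt hpos)
        _ = -(-⟪H p0, p0⟫) * ‖p‖ ^ 2 := by ring
  -- gradient is differentiable at e with derivative H
  have hgradC : ContDiff ℝ 1 (gradient V) := by
    have h1 : ContDiff ℝ 1 (fderiv ℝ V) := hV.fderiv_right (by norm_num)
    exact ((InnerProductSpace.toDual ℝ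
      (EuclideanSpace ℝ (Fin d))).symm.contDiff).comp h1
  have hGfd : HasFDerivAt (gradient V) H e :=
    ((hgradC.differentiable one_ne_zero) e).hasFDerivAt
  -- little-o control of the gradient near e
  have hc8 : (0:ℝ) < c / 8 := by linarith
  have hlo := hGfd.isLittleO.def hc8
  rw [Metric.eventually_nhds_iff] at hlo
  obtain ⟨δ, hδ, hδctl⟩ := hlo
  -- choose ε₁
  have hHn : (0:ℝ) ≤ ‖H‖ := norm_nonneg _
  obtain ⟨ε₁, hε₁pos, hε₁le1, hε₁H⟩ :
      ∃ ε : ℝ, 0 < ε ∧ ε ≤ 1 ∧ ε * ‖H‖ ≤ c / 8 := by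
    have hd : (0:ℝ) < ‖H‖ + 1 := by linarith
    refine ⟨min 1 (c / 8 / (‖H‖ + 1)), lt_min one_pos (div_pos hc8 hd),
      min_le_left _ _, ?_⟩
    have h1 : min 1 (c / 8 / (‖H‖ + 1)) ≤ c / 8 / (‖H‖ + 1) := min_le_right _ _
    have h2 : min 1 (c / 8 / (‖H‖ + 1)) * ‖H‖ ≤ (c / 8 / (‖H‖ + 1)) * (‖H‖ + 1) :=
      mul_le_mul h1 (by linarith) hHn (le_of_lt (div_pos hc8 hd))
    have h3 : (c / 8 / (‖H‖ + 1)) * (‖H‖ + 1) = c / 8 :=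
      div_mul_cancel₀ _ (ne_of_gt hd)
    linarith
  -- pick a frequently point
  have hev1 := hdom.def hε₁pos
  have hev2 : ∀ᶠ ξ : ℝ in atTop, dist (u ξ) e < δ :=
    (Metric.tendsto_nhds.mp hlimu) δ hδ
  obtain ⟨ξ, hpne, hqle, hdist⟩ := (hfreq.and_eventually (hev1.and hev2)).exists
  set h : EuclideanSpace ℝ (Fin d) := u ξ - e with hhdef
  set p : EuclideanSpace ℝ (Fin d) := (Submodule.orthogonalProjection N (u ξ - e) :
    EuclideanSpace ℝ (Fin d)) with hpdef
  set q : EuclideanSpace ℝ (Fin d) := h - p with hqdef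
  have hpN : p ∈ N := Submodule.coe_mem _
  have hpq : h = p + q := by simp [hqdef]
  have hqle' : ‖q‖ ≤ ε₁ * ‖p‖ := hqle
  have hpnorm : 0 < ‖p‖ := norm_pos_iff.2 hpne
  have hhle : ‖h‖ ≤ 2 * ‖p‖ := by
    calc ‖h‖ = ‖p + q‖ := by rw [hpq]
      _ ≤ ‖p‖ + ‖q‖ := norm_add_le _ _
      _ ≤ ‖p‖ + ε₁ * ‖p‖ := by linarith
      _ ≤ 2 * ‖p‖ := by nlinarith
  have hhδ : ‖h‖ < δ := by
    rw [hhdef, ← dist_eq_norm]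
    exact hdist
  have hhne : h ≠ 0 := by
    intro h0
    apply hpne
    rw [hpdef, hhdef] at *
    rw [show u ξ - e = (0 : EuclideanSpace ℝ (Fin d)) from h0]
    simp
  -- mean value theorem along the segment
  have hline : ∀ t : ℝ, HasDerivAt (fun t : ℝ => e + t • h) h t := by
    intro t
    simpa using ((hasDerivAt_id t).smul_const h).const_add e
  have hgder : ∀ t : ℝ, HasDerivAt (fun t => V (e + t • h))
      (⟪gradient V (e + t • h), h⟫) t := by
    intro t
    have := ((hVd (e + t • h)).hasGradientAt.hasFDerivAt).comp_hasDerivAt t (hline t)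
    rw [← InnerProductSpace.toDual_apply_apply]; exact this
  obtain ⟨t, ht, hteq⟩ := exists_hasDerivAt_eq_slope (fun t => V (e + t • h))
    (fun t => ⟪gradient V (e + t • h), h⟫) one_pos
    (fun t _ => (hgder t).continuousAt.continuousWithinAt)
    (fun t _ => hgder t)
  have ht0 : 0 < t := ht.1
  have ht1 : t < 1 := ht.2
  have hVdiff : V (u ξ) - V e = ⟪gradient V (e + t • h), h⟫ := by
    rw [hteq]
    simp [hhdef]
  -- gradient estimate at y := e + t • h
  have hydist : dist (e + t • h) e < δ := by
    rw [dist_eq_norm]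
    simp only [add_sub_cancel_left]
    rw [norm_smul]
    calc ‖t‖ * ‖h‖ ≤ 1 * ‖h‖ := by
          apply mul_le_mul_of_nonneg_right _ (norm_nonneg _)
          rw [Real.norm_eq_abs, abs_of_pos ht0]
          linarith
      _ < δ := by simpa using hhδ
  have hr := hδctl hydist
  rw [he] at hr
  simp only [sub_zero, add_sub_cancel_left] at hr
  -- hr : ‖gradient V (e + t • h) - H (t • h)‖ ≤ c / 8 * ‖t • h‖
  set r : EuclideanSpace ℝ (Fin d) := gradient V (e + t • h) - H (t • h) with hrdef
  have hinner : ⟪gradient V (e + t • h), h⟫ = t * ⟪H h, h⟫ + ⟪r, h⟫ := by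
    have : gradient V (e + t • h) = H (t • h) + r := by simp [hrdef]
    rw [this, inner_add_left, map_smul, real_inner_smul_left]
  have hrh : |⟪r, h⟫| ≤ (c / 8) * (t * (‖h‖ * ‖h‖)) := by
    calc |⟪r, h⟫| ≤ ‖r‖ * ‖h‖ := abs_real_inner_le_norm _ _
      _ ≤ (c / 8 * ‖t • h‖) * ‖h‖ := by
          apply mul_le_mul_of_nonneg_right hr (norm_nonneg _)
      _ = (c / 8) * (t * (‖h‖ * ‖h‖)) := by
          rw [norm_smul, Real.norm_eq_abs, abs_of_pos ht0]; ring
  -- quadratic form estimate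
  have hHh : ⟪H h, h⟫ ≤ -c * ‖p‖ ^ 2 + ‖H‖ * (2 * ‖p‖ * ‖q‖ + ‖q‖ ^ 2) := by
    have e1 : ⟪H h, h⟫ = ⟪H p, p⟫ + ⟪H p, q⟫ + ⟪H q, p⟫ + ⟪H q, q⟫ := by
      rw [hpq, map_add, inner_add_left, inner_add_right, inner_add_right]
      ring
    have b1 : ⟪H p, q⟫ ≤ ‖H‖ * (‖p‖ * ‖q‖) := by
      calc ⟪H p, q⟫ ≤ |⟪H p, q⟫| := le_abs_self _
        _ ≤ ‖H p‖ * ‖q‖ := abs_real_inner_le_norm _ _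
        _ ≤ (‖H‖ * ‖p‖) * ‖q‖ :=
            mul_le_mul_of_nonneg_right (H.le_opNorm p) (norm_nonneg _)
        _ = ‖H‖ * (‖p‖ * ‖q‖) := by ring
    have b2 : ⟪H q, p⟫ ≤ ‖H‖ * (‖p‖ * ‖q‖) := by
      calc ⟪H q, p⟫ ≤ |⟪H q, p⟫| := le_abs_self _
        _ ≤ ‖H q‖ * ‖p‖ := abs_real_inner_le_norm _ _
        _ ≤ (‖H‖ * ‖q‖) * ‖p‖ :=
            mul_le_mul_of_nonneg_right (H.le_opNorm q) (norm_nonneg _)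
        _ = ‖H‖ * (‖p‖ * ‖q‖) := by ring
    have b3 : ⟪H q, q⟫ ≤ ‖H‖ * ‖q‖ ^ 2 := by
      calc ⟪H q, q⟫ ≤ |⟪H q, q⟫| := le_abs_self _
        _ ≤ ‖H q‖ * ‖q‖ := abs_real_inner_le_norm _ _
        _ ≤ (‖H‖ * ‖q‖) * ‖q‖ :=
            mul_le_mul_of_nonneg_right (H.le_opNorm q) (norm_nonneg _)
        _ = ‖H‖ * ‖q‖ ^ 2 := by ring
    have b0 := hquad p hpN
    rw [e1]
    nlinarith
  -- final contradiction
  have hfinal : V (u ξ) - V e < 0 := by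
    rw [hVdiff]
    exact arith_aux c ‖H‖ ε₁ t _ _ _ ‖p‖ ‖q‖ ‖h‖ hc hHn hε₁pos hε₁le1 hε₁H ht0
      hinner hrh hHh hqle' hpnorm (norm_nonneg q) (norm_nonneg h) hhle
  have := hkey ξ
  linarith
end
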